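/- Let p be a prime, let F be a finite field with p^e elements, and let K be a subfield of F with p^f elements, where 1 ≤ f < e. Let u ≥ 3 be an integer with uf ≥ e, and let B be the set of points of PG(u−1, F) = PG(u−1, p^e) that admit a nonzero representative vector in F^u all of whose coordinates lie in K. Then B has cardinality (p^{fu}−1)/(p^f−1) and B is p^{uf−e}-divisible. -/

import Mathlib

open Module Finset

noncomputable section
open scoped Classical

variable (F : Type) [Field F] [Fintype F]

instance finiteSubmodule (v : ℕ) : Finite (Submodule F (Fin v → F)) :=
  Finite.of_injective (fun s => (s : Set (Fin v → F))) SetLike.coe_injective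

/-- The points of `PG(v-1,q)`: one-dimensional subspaces of `F_q^v`. -/
abbrev PGPoint (v : ℕ) := {W : Submodule F (Fin v → F) // finrank F W = 1}

instance (v : ℕ) : Fintype (PGPoint F v) := Fintype.ofFinite _

/-- Cardinality of a multiset of points. -/
def mCard {v : ℕ} (M : PGPoint F v → ℕ) : ℕ := ∑ P, M P

/-- Multiplicity of a subspace: the sum of multiplicities over points contained in it. -/
def mVal {v : ℕ} (M : PGPoint F v → ℕ) (S : Submodule F (Fin v → F)) : ℕ :=
  ∑ P : PGPoint F v, if P.1 ≤ S then M P else 0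

/-- A multiset of points is `Δ`-divisible if `#M ≡ M(H) (mod Δ)` for every hyperplane `H`. -/
def IsDivisibleMultiset {v : ℕ} (Δ : ℕ) (M : PGPoint F v → ℕ) : Prop :=
  ∀ H : Submodule F (Fin v → F), finrank F H = v - 1 → mCard F M ≡ mVal F M H [MOD Δ]

/-- A set of points is `Δ`-divisible if `|S| ≡ |S ∩ H| (mod Δ)` for every hyperplane `H`. -/
def IsDivisibleSet {v : ℕ} (Δ : ℕ) (S : Set (PGPoint F v)) : Prop :=
  ∀ H : Submodule F (Fin v → F), finrank F H = v - 1 →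
    S.ncard ≡ (S ∩ {P | P.1 ≤ H}).ncard [MOD Δ]

/-- A linear code `C ≤ F_q^m` is `Δ`-divisible if all Hamming weights are divisible by `Δ`. -/
def IsDivisibleCode {m : ℕ} (Δ : ℕ) (C : Submodule F (Fin m → F)) : Prop :=
  ∀ c ∈ C, Δ ∣ hammingNorm c

/-- The effective length: the number of coordinates where some codeword is nonzero. -/
def effLength {m : ℕ} (C : Submodule F (Fin m → F)) : ℕ :=
  Nat.card {i : Fin m // ∃ c ∈ C, c i ≠ 0}

/-- `s_q(a,b,i)`, with `q = p^e`, written without division: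
`s_q(a,b,0) = 1 + q + ⋯ + q^a` and `s_q(a,b,i) = p^{ie-b}·(1 + q + ⋯ + q^{a-i})` for `i ≥ 1`. -/
def sQ (p e a b i : ℕ) : ℕ :=
  if i = 0 then ∑ j ∈ Finset.range (a + 1), (p ^ e) ^ j
  else p ^ (i * e - b) * ∑ j ∈ Finset.range (a - i + 1), (p ^ e) ^ j


/-- Auxiliary: the span of a nonzero vector of a projective point is the point itself. -/
lemma span_point_eq {u : ℕ} (P : PGPoint F u) {x : Fin u → F} (hx : x ≠ 0) (hxP : x ∈ P.1) :
    Submodule.span F {x} = P.1 :=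
  Submodule.eq_of_le_of_finrank_eq
    ((Submodule.span_le).2 (Set.singleton_subset_iff.2 hxP))
    (by rw [finrank_span_singleton hx, P.2])

/-- Auxiliary: number of nonzero elements. -/
lemma card_ne_zero_aux (α : Type*) [Finite α] [Zero α] :
    Nat.card {x : α // x ≠ 0} = Nat.card α - 1 := by
  classical
  haveI : Unique {x : α // x = 0} := ⟨⟨⟨0, rfl⟩⟩, fun a => Subtype.ext a.2⟩
  have h1 : Nat.card ({x : α // x = 0} ⊕ {x : α // ¬ x = 0}) = Nat.card α :=
    Nat.card_congr (Equiv.sumCompl _)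
  rw [Nat.card_sum, Nat.card_unique] at h1
  have h2 : Nat.card {x : α // ¬ x = 0} = Nat.card {x : α // x ≠ 0} := rfl
  omega

/-- Auxiliary: fiber-counting. The nonzero vectors of `S` with coordinates in `K` are counted
by the points of `B` inside `S`, each contributing `|K| - 1` vectors. -/
lemma count_fibers (K : Subfield F) {u : ℕ} (S : Submodule F (Fin u → F)) :
    Nat.card {x : Fin u → F // x ≠ 0 ∧ (∀ i : Fin u, x i ∈ K) ∧ x ∈ S} =
      {P : PGPoint F u | (∃ x : Fin u → F, x ≠ 0 ∧ x ∈ P.1 ∧ ∀ i : Fin u, x i ∈ K) ∧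
          P.1 ≤ S}.ncard * (Fintype.card K - 1) := by
  classical
  set A : Set (PGPoint F u) :=
    {P | (∃ x : Fin u → F, x ≠ 0 ∧ x ∈ P.1 ∧ ∀ i : Fin u, x i ∈ K) ∧ P.1 ≤ S} with hA
  have hrep : ∀ P : A, ∃ x : Fin u → F, x ≠ 0 ∧ x ∈ (P : PGPoint F u).1 ∧
      ∀ i : Fin u, x i ∈ K := fun P => P.2.1
  let rep : A → Fin u → F := fun P => (hrep P).choose
  have hrep' : ∀ P : A, rep P ≠ 0 ∧ rep P ∈ (P : PGPoint F u).1 ∧ ∀ i : Fin u, rep P i ∈ K :=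
    fun P => (hrep P).choose_spec
  let g : A × {k : K // k ≠ 0} → {x : Fin u → F // x ≠ 0 ∧ (∀ i : Fin u, x i ∈ K) ∧ x ∈ S} :=
    fun Pk => ⟨((Pk.2.1 : K) : F) • rep Pk.1, by
      obtain ⟨hx0, hxP, hxK⟩ := hrep' Pk.1
      have hk : ((Pk.2.1 : K) : F) ≠ 0 := by simpa using Pk.2.2
      refine ⟨smul_ne_zero hk hx0, fun i => ?_, S.smul_mem _ (Pk.1.2.2 hxP)⟩
      show ((Pk.2.1 : K) : F) • rep Pk.1 i ∈ K
      rw [smul_eq_mul]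
      exact K.mul_mem (SetLike.coe_mem _) (hxK i)⟩
  have hbij : Function.Bijective g := by
    constructor
    · rintro ⟨P, k⟩ ⟨P', k'⟩ hgg
      have h : ((k.1 : K) : F) • rep P = ((k'.1 : K) : F) • rep P' :=
        congrArg Subtype.val hgg
      obtain ⟨hx0, hxP, hxK⟩ := hrep' P
      obtain ⟨hx0', hxP', hxK'⟩ := hrep' P'
      have hk : ((k.1 : K) : F) ≠ 0 := by simpa using k.2
      have hk' : ((k'.1 : K) : F) ≠ 0 := by simpa using k'.2
      have hPP' : P = P' := by
        have e1 : Submodule.span F {((k.1 : K) : F) • rep P} = P.1.1 := by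
          rw [Submodule.span_singleton_smul_eq (isUnit_iff_ne_zero.2 hk),
            span_point_eq F _ hx0 hxP]
        have e2 : Submodule.span F {((k'.1 : K) : F) • rep P'} = P'.1.1 := by
          rw [Submodule.span_singleton_smul_eq (isUnit_iff_ne_zero.2 hk'),
            span_point_eq F _ hx0' hxP']
        have hval : P.1.1 = P'.1.1 := by
          rw [← e1, ← e2, h]
        exact Subtype.ext (Subtype.ext hval)
      subst hPP'
      have hkk : ((k.1 : K) : F) = ((k'.1 : K) : F) := by
        by_contra hne
        have hzero : (((k.1 : K) : F) - ((k'.1 : K) : F)) • rep P = 0 := by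
          rw [sub_smul, h, sub_self]
        rcases smul_eq_zero.1 hzero with h1 | h1
        · exact hne (sub_eq_zero.1 h1)
        · exact hx0 h1
      have hkeq : k = k' := Subtype.ext (Subtype.ext hkk)
      rw [hkeq]
    · rintro ⟨y, hy0, hyK, hyS⟩
      have hPfin : finrank F (Submodule.span F {y}) = 1 := finrank_span_singleton hy0
      have hP0A : (⟨Submodule.span F {y}, hPfin⟩ : PGPoint F u) ∈ A := by
        refine ⟨⟨y, hy0, Submodule.mem_span_singleton_self y, hyK⟩, ?_⟩
        exact (Submodule.span_le).2 (Set.singleton_subset_iff.2 hyS)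
      set P : A := ⟨⟨Submodule.span F {y}, hPfin⟩, hP0A⟩ with hP
      obtain ⟨hx0, hxP, hxK⟩ := hrep' P
      have hspan : Submodule.span F {rep P} = Submodule.span F {y} :=
        span_point_eq F (⟨Submodule.span F {y}, hPfin⟩ : PGPoint F u) hx0 hxP
      have hymem : y ∈ Submodule.span F {rep P} :=
        hspan ▸ Submodule.mem_span_singleton_self y
      obtain ⟨c, hc⟩ := Submodule.mem_span_singleton.1 hymem
      have hc0 : c ≠ 0 := by
        rintro rfl
        rw [zero_smul] at hc
        exact hy0 hc.symm
      obtain ⟨i, hi⟩ : ∃ i, rep P i ≠ 0 := Function.ne_iff.1 hx0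
      have hci : c * rep P i = y i := by
        have := congrFun hc i
        simpa using this
      have hcK : c ∈ K := by
        have hcy : c = y i * (rep P i)⁻¹ := by
          rw [← hci, mul_assoc, mul_inv_cancel₀ hi, mul_one]
        rw [hcy]
        exact K.mul_mem (hyK i) (K.inv_mem (hxK i))
      refine ⟨⟨P, ⟨⟨c, hcK⟩, ?_⟩⟩, ?_⟩
      · intro hzero
        exact hc0 (by simpa [Subtype.ext_iff] using hzero)
      · exact Subtype.ext hc
  have hcard := Nat.card_eq_of_bijective g hbij
  rw [← hcard, Nat.card_prod, Nat.card_coe_set_eq]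
  congr 1
  rw [card_ne_zero_aux, Nat.card_eq_fintype_card]

/-- Auxiliary: moving from vectors in `F^u` with coordinates in `K` to vectors in `K^u`. -/
lemma card_coordK (K : Subfield F) {u : ℕ} (S : Submodule F (Fin u → F)) :
    Nat.card {x : Fin u → F // x ≠ 0 ∧ (∀ i : Fin u, x i ∈ K) ∧ x ∈ S} =
      Nat.card {y : Fin u → K // y ≠ 0 ∧ (fun i => (y i : F)) ∈ S} := by
  apply Nat.card_congr
  refine ⟨fun x => ⟨fun i => ⟨x.1 i, x.2.2.1 i⟩, ?_, ?_⟩,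
    fun y => ⟨fun i => (y.1 i : F), ?_, fun i => SetLike.coe_mem _, y.2.2⟩, ?_, ?_⟩
  · intro h
    apply x.2.1
    funext i
    have := congrFun h i
    simpa [Subtype.ext_iff] using this
  · exact x.2.2.2
  · intro h
    apply y.2.1
    funext i
    have := congrFun h i
    exact Subtype.ext (by simpa using this)
  · intro x
    exact Subtype.ext rfl
  · intro y
    exact Subtype.ext (funext fun i => Subtype.ext rfl)

/-- Let `F` be a finite field with `p^e` elements and `K` a subfield with
`p^f` elements, `1 ≤ f < e`. For `u ≥ 3` with `uf ≥ e`, the set `B` of points of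
`PG(u-1, p^e)` admitting a nonzero representative vector all of whose coordinates lie in `K`
has cardinality `(p^{fu}−1)/(p^f−1) = 1 + p^f + ⋯ + (p^f)^{u-1}` and is `p^{uf-e}`-divisible. -/
theorem stmt_7 (p e f : ℕ) (hp : p.Prime) (hf : 1 ≤ f) (hfe : f < e)
    (hF : Fintype.card F = p ^ e) (K : Subfield F) (hK : Fintype.card K = p ^ f)
    (u : ℕ) (hu : 3 ≤ u) (hue : e ≤ u * f)
    (B : Set (PGPoint F u))
    (hB : B = {P : PGPoint F u |
      ∃ x : Fin u → F, x ≠ 0 ∧ x ∈ P.1 ∧ ∀ i : Fin u, x i ∈ K}) :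
    B.ncard = ∑ j ∈ Finset.range u, (p ^ f) ^ j ∧
    IsDivisibleSet F (p ^ (u * f - e)) B := by
  classical
  have hp2 : 2 ≤ p := hp.two_le
  have hq1 : 1 ≤ p ^ f := Nat.one_le_pow _ _ (by omega)
  have hqu1 : 1 ≤ p ^ (u * f) := Nat.one_le_pow _ _ (by omega)
  have hpow : (p ^ f) ^ u = p ^ (u * f) := by rw [← pow_mul, mul_comm]
  have hq2 : 2 ≤ p ^ f := Nat.one_lt_pow (by omega) (by omega)
  -- geometric sum identity
  have hgeom : (∑ j ∈ Finset.range u, (p ^ f) ^ j) * (p ^ f - 1) = p ^ (u * f) - 1 := by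
    zify [hq1, hqu1]
    rw [geom_sum_mul, ← pow_mul, mul_comm f u]
  -- counting for the whole space
  have hAB : {P : PGPoint F u | (∃ x : Fin u → F, x ≠ 0 ∧ x ∈ P.1 ∧ ∀ i : Fin u, x i ∈ K) ∧
      P.1 ≤ (⊤ : Submodule F (Fin u → F))} = B := by
    rw [hB]; ext P; simp
  have hN : B.ncard * (p ^ f - 1) = p ^ (u * f) - 1 := by
    have hTtop : Nat.card {y : Fin u → K // y ≠ 0 ∧
        (fun i => (y i : F)) ∈ (⊤ : Submodule F (Fin u → F))} = p ^ (u * f) - 1 := by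
      have e : {y : Fin u → K // y ≠ 0 ∧ (fun i => (y i : F)) ∈ (⊤ : Submodule F (Fin u → F))} ≃
          {y : Fin u → K // y ≠ 0} := Equiv.subtypeEquivRight (by simp)
      rw [Nat.card_congr e, card_ne_zero_aux, Nat.card_fun, Nat.card_eq_fintype_card,
        Nat.card_eq_fintype_card, hK, Fintype.card_fin, hpow]
    rw [← hAB, ← hK, ← count_fibers F K ⊤, card_coordK F K ⊤, hTtop]
  refine ⟨?_, ?_⟩
  · refine Nat.eq_of_mul_eq_mul_right (show 0 < p ^ f - 1 by omega) ?_
    rw [hN, hgeom]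
  -- divisibility
  intro H hH
  set Q := (Fin u → F) ⧸ H with hQ
  have hrV : finrank F (Fin u → F) = u := by
    rw [Module.finrank_pi, Fintype.card_fin]
  have hQ1 : finrank F Q = 1 := by
    have h := Submodule.finrank_quotient_add_finrank H
    rw [hrV, hH] at h
    show finrank F ((Fin u → F) ⧸ H) = 1
    omega
  haveI : Fintype Q := Fintype.ofFinite _
  have hcardQ : Nat.card Q = p ^ e := by
    rw [Nat.card_eq_fintype_card, card_eq_pow_finrank (K := F), hQ1, hF, pow_one]
  -- the additive map to the quotient
  let ψ : (Fin u → K) →+ Q := AddMonoidHom.mk'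
    (fun y => Submodule.Quotient.mk (fun i => (y i : F)))
    (by
      intro a b
      have hfun : (fun i => (((a + b) i : K) : F)) =
          (fun i => ((a i : K) : F)) + fun i => ((b i : K) : F) := by
        funext i; simp
      show Submodule.Quotient.mk _ = _
      rw [hfun, Submodule.Quotient.mk_add])
  have hker : ∀ y : Fin u → K, y ∈ ψ.ker ↔ (fun i => (y i : F)) ∈ H := by
    intro y
    rw [AddMonoidHom.mem_ker]
    exact Submodule.Quotient.mk_eq_zero H
  -- Lagrange and the first isomorphism theorem
  have h1 : Nat.card (Fin u → K) =
      Nat.card ((Fin u → K) ⧸ ψ.ker) * Nat.card ψ.ker :=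
    AddSubgroup.card_eq_card_quotient_mul_card_addSubgroup _
  have h2 : Nat.card ((Fin u → K) ⧸ ψ.ker) = Nat.card ψ.range :=
    Nat.card_congr (QuotientAddGroup.quotientKerEquivRange ψ).toEquiv
  have h3 : Nat.card ψ.range ∣ p ^ e := by
    rw [← hcardQ]
    exact AddSubgroup.card_addSubgroup_dvd_card _
  obtain ⟨d, hdle, hd⟩ := (Nat.dvd_prime_pow hp).1 h3
  have hmK : Nat.card (Fin u → K) = p ^ (u * f) := by
    rw [Nat.card_fun, Nat.card_eq_fintype_card, Nat.card_eq_fintype_card, hK,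
      Fintype.card_fin, hpow]
  have hdleuf : d ≤ u * f := le_trans hdle hue
  have hW : Nat.card ψ.ker = p ^ (u * f - d) := by
    have hsplit : p ^ (u * f) = p ^ d * p ^ (u * f - d) := by
      rw [← pow_add]
      congr 1
      omega
    rw [hmK, h2, hd, hsplit] at h1
    exact (Nat.eq_of_mul_eq_mul_left (pow_pos hp.pos d) h1.symm)
  -- counting for the hyperplane
  have hAH : {P : PGPoint F u | (∃ x : Fin u → F, x ≠ 0 ∧ x ∈ P.1 ∧ ∀ i : Fin u, x i ∈ K) ∧
      P.1 ≤ H} = B ∩ {P : PGPoint F u | P.1 ≤ H} := by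
    rw [hB]; ext P; simp [Set.mem_inter_iff, Set.mem_setOf_eq]
  have hNH : (B ∩ {P : PGPoint F u | P.1 ≤ H}).ncard * (p ^ f - 1) =
      p ^ (u * f - d) - 1 := by
    have eH : {y : Fin u → K // y ≠ 0 ∧ (fun i => (y i : F)) ∈ H} ≃ {w : ψ.ker // w ≠ 0} :=
      { toFun := fun y => ⟨⟨y.1, (hker y.1).2 y.2.2⟩,
          fun h => y.2.1 (by simpa [Subtype.ext_iff] using h)⟩
        invFun := fun w => ⟨w.1.1,
          fun h => w.2 (Subtype.ext (by simpa using h)), (hker _).1 w.1.2⟩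
        left_inv := fun y => Subtype.ext rfl
        right_inv := fun w => Subtype.ext (Subtype.ext rfl) }
    have hTH : Nat.card {y : Fin u → K // y ≠ 0 ∧ (fun i => (y i : F)) ∈ H} =
        p ^ (u * f - d) - 1 := by
      rw [Nat.card_congr eH, card_ne_zero_aux, hW]
    rw [← hAH, ← hK, ← count_fibers F K H, card_coordK F K H, hTH]
  -- arithmetic conclusion
  have hmle : u * f - d ≤ u * f := Nat.sub_le _ _
  have h1m : 1 ≤ p ^ (u * f - d) := Nat.one_le_pow _ _ (by omega)
  have hple : p ^ (u * f - d) ≤ p ^ (u * f) :=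
    Nat.pow_le_pow_right hp.pos hmle
  have hq1pos : 0 < p ^ f - 1 := by omega
  have hNHleN : (B ∩ {P : PGPoint F u | P.1 ≤ H}).ncard ≤ B.ncard := by
    refine Nat.le_of_mul_le_mul_right ?_ hq1pos
    rw [hN, hNH]
    omega
  have hsub : (B.ncard - (B ∩ {P : PGPoint F u | P.1 ≤ H}).ncard) * (p ^ f - 1) =
      p ^ (u * f) - p ^ (u * f - d) := by
    rw [Nat.sub_mul, hN, hNH]
    omega
  have hdvd1 : p ^ (u * f - e) ∣ p ^ (u * f) - p ^ (u * f - d) :=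
    Nat.dvd_sub (pow_dvd_pow p (Nat.sub_le _ _))
      (pow_dvd_pow p (by omega))
  have hcop : (p ^ (u * f - e)).Coprime (p ^ f - 1) := by
    refine Nat.Coprime.pow_left _ ?_
    refine (Nat.Prime.coprime_iff_not_dvd hp).2 ?_
    intro hdvd
    have hd1 : p ∣ p ^ f - (p ^ f - 1) :=
      Nat.dvd_sub (dvd_pow_self p (by omega)) hdvd
    rw [Nat.sub_sub_self hq1] at hd1
    exact absurd (Nat.le_of_dvd one_pos hd1) (by omega)
  have hdvd : p ^ (u * f - e) ∣ B.ncard - (B ∩ {P : PGPoint F u | P.1 ≤ H}).ncard :=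
    hcop.dvd_of_dvd_mul_right (hsub ▸ hdvd1)
  exact ((Nat.modEq_iff_dvd' hNHleN).2 hdvd).symm

end
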